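/- arXiv:2509.16569 — 4 statements merged into one kernel-verified Lean document; each statement's English description precedes it below -/
import Mathlib

section
/- For any strictly descending tuple a = (a_n, ..., a_0) of nonnegative integers and any prime p, the p-adic valuation of w(a) = ∏_{0 ≤ i < j ≤ n}(a_i - a_j) is at least the p-adic valuation of w((n, n-1, ..., 1, 0)) = ∏_{0 ≤ k ≤ n} k!. That is, v_p(∏_{i<j}(a_i - a_j)) ≥ v_p(∏_{k=0}^n k!). -/
/-- For any strictly descending tuple of nonnegative integers (indexed so that
`a` is strictly increasing in the index) and any prime `p`, the `p`-adic valuation of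
`w(a) = ∏_{i<j} (a_j - a_i)` is at least the `p`-adic valuation of
`w((n, …, 1, 0)) = ∏_{k=0}^n k!`. -/
theorem stmt_1 (n : ℕ) (a : Fin (n + 1) → ℕ) (ha : StrictMono a) (p : ℕ) (hp : p.Prime) :
    padicValNat p (∏ k ∈ Finset.range (n + 1), Nat.factorial k) ≤
      padicValNat p (∏ i : Fin (n + 1), ∏ j ∈ Finset.Ioi i, (a j - a i)) := by
  set N : ℕ := ∏ i : Fin (n + 1), ∏ j ∈ Finset.Ioi i, (a j - a i) with hN
  have hNpos : 0 < N := by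
    apply Finset.prod_pos
    intro i _
    apply Finset.prod_pos
    intro j hj
    exact Nat.sub_pos_of_lt (ha (Finset.mem_Ioi.mp hj))
  have hdvd : Nat.superFactorial n ∣ N := by
    have h := Matrix.superFactorial_dvd_vandermonde_det (fun i : Fin (n + 1) => (a i : ℤ))
    rw [Matrix.det_vandermonde] at h
    have hcast : (∏ i : Fin (n + 1), ∏ j ∈ Finset.Ioi i, ((a j : ℤ) - (a i : ℤ))) = (N : ℤ) := by
      rw [hN]
      push_cast
      refine Finset.prod_congr rfl fun i _ => Finset.prod_congr rfl fun j hj => ?_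
      rw [Nat.cast_sub (le_of_lt (ha (Finset.mem_Ioi.mp hj)))]
    rw [hcast] at h
    exact_mod_cast h
  rw [Nat.prod_range_succ_factorial]
  have hsf : 0 < Nat.superFactorial n := by
    rw [← Nat.prod_range_succ_factorial]
    exact Finset.prod_pos fun k _ => Nat.factorial_pos k
  have h1 : padicValNat p (Nat.superFactorial n) ≤ padicValNat p N := by
    have := (Nat.factorization_le_iff_dvd hsf.ne' hNpos.ne').mpr hdvd
    have := this p
    simpa [Nat.factorization_def _ hp] using this
  exact h1
end

section
/- Let a = (a_n, ..., a_0) be a tuple of even nonnegative integers with a_n > a_{n-1} > ... > a_0. Then v_2(∏_{0 ≤ i < j ≤ n}(a_i - a_j)) ≥ n(n+1)/2 + ∑_{k=0}^{n} v_2(k!). -/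
/-- For a strictly descending tuple of even nonnegative integers (indexed so
that `a` is strictly increasing in the index), the `2`-adic valuation of
`∏_{i<j} (a_j - a_i)` is at least `n(n+1)/2 + ∑_{k=0}^n v_2(k!)`. -/
theorem stmt_4 (n : ℕ) (a : Fin (n + 1) → ℕ) (ha : StrictMono a)
    (heven : ∀ i, Even (a i)) :
    n * (n + 1) / 2 + ∑ k ∈ Finset.range (n + 1), padicValNat 2 (Nat.factorial k) ≤
      padicValNat 2 (∏ i : Fin (n + 1), ∏ j ∈ Finset.Ioi i, (a j - a i)) := by
  set b : Fin (n + 1) → ℕ := fun i => a i / 2 with hbdef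
  have h2 : ∀ i, 2 * b i = a i := by
    intro i
    obtain ⟨r, hr⟩ := heven i
    simp [hbdef, hr, ← two_mul]
  have hbm : StrictMono b := by
    intro i j hij
    have h1 := ha hij
    have : 2 * b i < 2 * b j := by rw [h2, h2]; exact h1
    omega
  set Q : ℕ := ∏ i : Fin (n + 1), ∏ j ∈ Finset.Ioi i, (b j - b i) with hQdef
  have hQ0 : Q ≠ 0 := by
    rw [hQdef]
    apply Finset.prod_ne_zero_iff.mpr
    intro i _
    apply Finset.prod_ne_zero_iff.mpr
    intro j hj
    exact Nat.sub_ne_zero_of_lt (hbm (Finset.mem_Ioi.mp hj))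
  -- factor out the 2's
  have hfac : (∏ i : Fin (n + 1), ∏ j ∈ Finset.Ioi i, (a j - a i)) =
      2 ^ (∑ i : Fin (n + 1), (Finset.Ioi i).card) * Q := by
    rw [hQdef, ← Finset.prod_pow_eq_pow_sum, ← Finset.prod_mul_distrib]
    apply Finset.prod_congr rfl
    intro i _
    rw [← Finset.prod_const, ← Finset.prod_mul_distrib]
    apply Finset.prod_congr rfl
    intro j hj
    have hij : i < j := Finset.mem_Ioi.mp hj
    have hi := h2 i
    have hjj := h2 j
    omega
  have hcard : n * (n + 1) / 2 ≤ ∑ i : Fin (n + 1), (Finset.Ioi i).card := by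
    have : ∑ i : Fin (n + 1), (Finset.Ioi i).card = ∑ i : Fin (n + 1), (n - (i : ℕ)) := by
      apply Finset.sum_congr rfl
      intro i _
      simp [Fin.card_Ioi]
    rw [this, Fin.sum_univ_eq_sum_range (fun i => n - i)]
    have h3 : ∑ i ∈ Finset.range (n + 1), (n - i) = ∑ i ∈ Finset.range (n + 1), i := by
      rw [← Finset.sum_range_reflect]
      apply Finset.sum_congr rfl
      intro i hi
      have := Finset.mem_range.mp hi
      omega
    rw [h3, Finset.sum_range_id]
    simp [Nat.mul_comm]
  -- superfactorial divides Q
  have hsf : Nat.superFactorial n ∣ Q := by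
    have h := Matrix.superFactorial_dvd_vandermonde_det (fun i => (b i : ℤ))
    rw [Matrix.det_vandermonde] at h
    have hcast : (Q : ℤ) = ∏ i : Fin (n + 1), ∏ j ∈ Finset.Ioi i, ((b j : ℤ) - (b i : ℤ)) := by
      rw [hQdef]
      push_cast
      apply Finset.prod_congr rfl
      intro i _
      apply Finset.prod_congr rfl
      intro j hj
      have := (hbm (Finset.mem_Ioi.mp hj)).le
      push_cast [Nat.cast_sub this]
      ring
    rw [← hcast] at h
    exact_mod_cast h
  have hval : ∑ k ∈ Finset.range (n + 1), padicValNat 2 (Nat.factorial k) ≤ padicValNat 2 Q := by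
    rw [← padicValNat_dvd_iff_le hQ0]
    calc (2 : ℕ) ^ ∑ k ∈ Finset.range (n + 1), padicValNat 2 (Nat.factorial k)
        = ∏ k ∈ Finset.range (n + 1), 2 ^ padicValNat 2 (Nat.factorial k) :=
          (Finset.prod_pow_eq_pow_sum _ _ _).symm
      _ ∣ ∏ k ∈ Finset.range (n + 1), Nat.factorial k :=
          Finset.prod_dvd_prod_of_dvd _ _ (fun k _ => pow_padicValNat_dvd)
      _ = Nat.superFactorial n := Nat.prod_range_succ_factorial n
      _ ∣ Q := hsf
  rw [hfac, padicValNat.mul (by positivity) hQ0, padicValNat.prime_pow]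
  omega
end

section
/- Let (A,m) be a 2-dimensional multiarrangement and H ∈ A. Let m + δ_H be the multiplicity that increases m(H) by 1 and leaves other multiplicities unchanged. Then |Δ(A,m) − Δ(A, m + δ_H)| = 1. In particular, if Δ(A,m) = 0, then Δ(A, m ± δ_H) = 1 for every H ∈ A (for m − δ_H assuming m(H) ≥ 2). -/
open MvPolynomial

noncomputable section

/-- Membership in the logarithmic derivation module `D(A,m)` of a 2-dimensional
multiarrangement whose `i`-th line is the kernel of the linear form
`(co i).1 * x + (co i).2 * y` with multiplicity `m i`.  A derivation
`θ = f ∂_x + g ∂_y` is encoded as the pair `(f, g)`; it is logarithmic iff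
`θ(α_H) ∈ α_H^{m(H)} S` for every line `H`. -/
def MemD {K : Type*} [Field K] {n : ℕ} (co : Fin n → K × K) (m : Fin n → ℕ)
    (θ : MvPolynomial (Fin 2) K × MvPolynomial (Fin 2) K) : Prop :=
  ∀ i, (C (co i).1 * X 0 + C (co i).2 * X 1) ^ (m i) ∣
    (C (co i).1 * θ.1 + C (co i).2 * θ.2)

/-- The defining polynomial `Q(A,m) = ∏_H α_H^{m(H)}` of the multiarrangement. -/
def Qpoly {K : Type*} [Field K] {n : ℕ} (co : Fin n → K × K) (m : Fin n → ℕ) :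
    MvPolynomial (Fin 2) K :=
  ∏ i, (C (co i).1 * X 0 + C (co i).2 * X 1) ^ (m i)

/-- `(A, m)` is free with exponents `(d₁, d₂)`: by Saito's criterion this means there are
homogeneous logarithmic derivations `θ₁, θ₂` of degrees `d₁, d₂` whose coefficient
determinant is a nonzero scalar multiple of `Q(A,m)`; such `θ₁, θ₂` form a homogeneous
basis of the rank-2 free module `D(A,m)`. -/
def IsExp {K : Type*} [Field K] {n : ℕ} (co : Fin n → K × K) (m : Fin n → ℕ)
    (d₁ d₂ : ℕ) : Prop :=
  ∃ θ₁ θ₂ : MvPolynomial (Fin 2) K × MvPolynomial (Fin 2) K,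
    MemD co m θ₁ ∧ MemD co m θ₂ ∧
    θ₁.1.IsHomogeneous d₁ ∧ θ₁.2.IsHomogeneous d₁ ∧
    θ₂.1.IsHomogeneous d₂ ∧ θ₂.2.IsHomogeneous d₂ ∧
    ∃ c : K, c ≠ 0 ∧ θ₁.1 * θ₂.2 - θ₁.2 * θ₂.1 = C c * Qpoly co m

namespace Stmt8Aux

variable {K : Type*} [Field K]

/-! ### Linear forms: homogeneity, nonvanishing, primality -/

lemma lin_hom (a b : K) : (C a * X 0 + C b * X 1 : MvPolynomial (Fin 2) K).IsHomogeneous 1 :=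
  (isHomogeneous_C_mul_X a 0).add (isHomogeneous_C_mul_X b 1)

lemma lin_eq_zero {a b : K} (h : (C a * X 0 + C b * X 1 : MvPolynomial (Fin 2) K) = 0) :
    a = 0 ∧ b = 0 := by
  constructor
  · have := congrArg (eval (fun k : Fin 2 => if k = 0 then 1 else 0)) h
    simpa using this
  · have := congrArg (eval (fun k : Fin 2 => if k = 0 then 0 else 1)) h
    simpa using this

def autn (f g : Fin 2 → MvPolynomial (Fin 2) K)
    (h0 : aeval f (g 0) = X 0) (h1 : aeval f (g 1) = X 1)
    (h0' : aeval g (f 0) = X 0) (h1' : aeval g (f 1) = X 1) :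
    MvPolynomial (Fin 2) K ≃ₐ[K] MvPolynomial (Fin 2) K :=
  AlgEquiv.ofAlgHom (aeval f) (aeval g)
    (by
      apply algHom_ext
      intro i
      simp only [AlgHom.comp_apply, aeval_X, AlgHom.id_apply]
      fin_cases i
      · exact h0
      · exact h1)
    (by
      apply algHom_ext
      intro i
      simp only [AlgHom.comp_apply, aeval_X, AlgHom.id_apply]
      fin_cases i
      · exact h0'
      · exact h1')

lemma autn_apply_X (f g h0 h1 h0' h1') (i : Fin 2) :
    (autn (K := K) f g h0 h1 h0' h1') (X i) = f i := by
  simp [autn, AlgEquiv.ofAlgHom]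

lemma prime_equiv {R S : Type*} [CommRing R] [CommRing S] (e : R ≃+* S) {p : R}
    (hp : Prime p) : Prime (e p) := (MulEquiv.prime_iff e.toMulEquiv).mpr hp

lemma prime_X0 : Prime (X 0 : MvPolynomial (Fin 2) K) := by
  have h := prime_equiv (MvPolynomial.finSuccEquiv K 1).toRingEquiv.symm
    (Polynomial.prime_X (R := MvPolynomial (Fin 1) K))
  have : (MvPolynomial.finSuccEquiv K 1).toRingEquiv.symm Polynomial.X
      = (X 0 : MvPolynomial (Fin 2) K) := by
    rw [← finSuccEquiv_X_zero (R := K) (n := 1)]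
    exact (MvPolynomial.finSuccEquiv K 1).toRingEquiv.symm_apply_apply _
  rwa [this] at h

lemma prime_aut (e : MvPolynomial (Fin 2) K ≃ₐ[K] MvPolynomial (Fin 2) K)
    {p : MvPolynomial (Fin 2) K} (hp : Prime p) : Prime (e p) :=
  prime_equiv e.toRingEquiv hp

lemma prime_X1 : Prime (X 1 : MvPolynomial (Fin 2) K) := by
  have h01 : aeval (R := K) (![X 1, X 0] : Fin 2 → MvPolynomial (Fin 2) K) (X (1:Fin 2)) = X 0 := by
    simp
  have h00 : aeval (R := K) (![X 1, X 0] : Fin 2 → MvPolynomial (Fin 2) K) (X (0:Fin 2)) = X 1 := by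
    simp
  have := prime_aut (autn ![X 1, X 0] ![X 1, X 0]
    (by simpa using h01) (by simpa using h00) (by simpa using h01) (by simpa using h00))
    (prime_X0 (K := K))
  rwa [autn_apply_X] at this

lemma prime_lin (a b : K) (h : ¬ (a = 0 ∧ b = 0)) :
    Prime (C a * X 0 + C b * X 1 : MvPolynomial (Fin 2) K) := by
  by_cases ha : a = 0
  · subst ha
    have hb : b ≠ 0 := fun hb => h ⟨rfl, hb⟩
    have he : (C (0:K) * X 0 + C b * X 1 : MvPolynomial (Fin 2) K) = C b * X 1 := by
      simp
    rw [he]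
    have hu : IsUnit (C b : MvPolynomial (Fin 2) K) :=
      IsUnit.of_mul_eq_one (C b⁻¹) (by rw [← C_mul, mul_inv_cancel₀ hb, C_1])
    exact ((associated_unit_mul_left (X 1) (C b) hu).symm.prime (prime_X1 (K := K)))
  · have hCa : (C a⁻¹ : MvPolynomial (Fin 2) K) * C a = 1 := by
      rw [← C_mul, inv_mul_cancel₀ ha, C_1]
    have hCa' : (C a : MvPolynomial (Fin 2) K) * C a⁻¹ = 1 := by
      rw [← C_mul, mul_inv_cancel₀ ha, C_1]
    set f : Fin 2 → MvPolynomial (Fin 2) K := ![C a * X 0 + C b * X 1, X 1] with hf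
    set g : Fin 2 → MvPolynomial (Fin 2) K := ![C a⁻¹ * (X 0 - C b * X 1), X 1] with hg
    have h0 : aeval (R := K) f (g 0) = X 0 := by
      simp only [hf, hg, Matrix.cons_val_zero, Matrix.cons_val_one, Matrix.head_cons,
        map_mul, map_sub, map_add, aeval_C, aeval_X, algebraMap_eq]
      linear_combination (X 0 : MvPolynomial (Fin 2) K) * hCa
    have h1 : aeval (R := K) f (g 1) = X 1 := by
      simp [hf, hg]
    have h0' : aeval (R := K) g (f 0) = X 0 := by
      simp only [hf, hg, Matrix.cons_val_zero, Matrix.cons_val_one, Matrix.head_cons,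
        map_mul, map_sub, map_add, aeval_C, aeval_X, algebraMap_eq]
      linear_combination ((X 0 : MvPolynomial (Fin 2) K) - C b * X 1) * hCa'
    have h1' : aeval (R := K) g (f 1) = X 1 := by
      simp [hf, hg]
    have := prime_aut (autn f g h0 h1 h0' h1') (prime_X0 (K := K))
    rwa [autn_apply_X] at this

/-! ### Homogeneous divisibility and degrees -/

variable {p r : MvPolynomial (Fin 2) K} {N D : ℕ}

lemma hc_mul (hp : p.IsHomogeneous N) (k : ℕ) (r : MvPolynomial (Fin 2) K) :
    homogeneousComponent (N + k) (p * r) = p * homogeneousComponent k r := by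
  conv_lhs => rw [← sum_homogeneousComponent r, Finset.mul_sum, map_sum]
  have hterm : ∀ j : ℕ, homogeneousComponent (N + k) (p * homogeneousComponent j r)
      = if N + k = N + j then p * homogeneousComponent j r else 0 := fun j =>
    homogeneousComponent_of_mem ((mem_homogeneousSubmodule _ _).mpr
      (hp.mul (homogeneousComponent_isHomogeneous j r)))
  simp_rw [hterm, add_right_inj]
  rw [Finset.sum_ite_eq]
  by_cases hk : k ∈ Finset.range (r.totalDegree + 1)
  · rw [if_pos hk]
  · rw [if_neg hk, homogeneousComponent_eq_zero, mul_zero]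
    simpa using hk

lemma homog_of_mul_homog (hp0 : p ≠ 0) (hp : p.IsHomogeneous N) (hr0 : r ≠ 0)
    (hq : (p * r).IsHomogeneous D) : N ≤ D ∧ r.IsHomogeneous (D - N) := by
  have key : ∀ k, homogeneousComponent k r ≠ 0 → N + k = D := by
    intro k hk
    by_contra hne
    have h1 := hc_mul hp k r
    have h2 : homogeneousComponent (N + k) (p * r) = 0 := by
      rw [homogeneousComponent_of_mem ((mem_homogeneousSubmodule _ _).mpr hq), if_neg hne]
    rw [h2] at h1
    exact hk ((mul_eq_zero.mp h1.symm).resolve_left hp0)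
  have hex : ∃ k, homogeneousComponent k r ≠ 0 := by
    by_contra hcon
    push_neg at hcon
    exact hr0 (by rw [← sum_homogeneousComponent r]; exact Finset.sum_eq_zero fun i _ => hcon i)
  obtain ⟨k, hk⟩ := hex
  have hNk := key k hk
  refine ⟨by omega, ?_⟩
  have hmem : k ∈ Finset.range (r.totalDegree + 1) := by
    by_contra hcon
    exact hk (homogeneousComponent_eq_zero _ _ (by simpa using hcon))
  have hr : r = homogeneousComponent k r := by
    conv_lhs => rw [← sum_homogeneousComponent r]
    refine Finset.sum_eq_single_of_mem k hmem fun j _ hj => ?_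
    by_contra h'
    exact hj (by have := key j h'; omega)
  rw [hr]
  have hDN : D - N = k := by omega
  rw [hDN]
  exact homogeneousComponent_isHomogeneous k r

/-! ### Facts about the arrangement -/

variable {n : ℕ} {co : Fin n → K × K} {m : Fin n → ℕ}

lemma A_ne_zero (hne : ∀ i, co i ≠ 0) (i : Fin n) :
    (C (co i).1 * X 0 + C (co i).2 * X 1 : MvPolynomial (Fin 2) K) ≠ 0 := fun h =>
  hne i (Prod.ext (lin_eq_zero h).1 (lin_eq_zero h).2)

lemma A_prime (hne : ∀ i, co i ≠ 0) (i : Fin n) :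
    Prime (C (co i).1 * X 0 + C (co i).2 * X 1 : MvPolynomial (Fin 2) K) :=
  prime_lin _ _ (fun h => hne i (Prod.ext h.1 h.2))

lemma A_not_dvd (hne : ∀ i, co i ≠ 0)
    (hdist : ∀ i j, i ≠ j → (co i).1 * (co j).2 ≠ (co i).2 * (co j).1)
    {i j : Fin n} (hij : i ≠ j) :
    ¬ ((C (co i).1 * X 0 + C (co i).2 * X 1 : MvPolynomial (Fin 2) K) ∣
      (C (co j).1 * X 0 + C (co j).2 * X 1)) := by
  rintro ⟨r, hr⟩
  have hr0 : r ≠ 0 := by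
    rintro rfl
    exact A_ne_zero hne j (by rw [hr, mul_zero])
  have hhom := (homog_of_mul_homog (A_ne_zero hne i) (lin_hom _ _) hr0
    (hr ▸ lin_hom (co j).1 (co j).2)).2
  have hrC : r = C (constantCoeff r) := by
    have hhom0 : r.IsHomogeneous 0 := by simpa using hhom
    have h1 := homogeneousComponent_of_mem (m := 0)
      ((mem_homogeneousSubmodule 0 r).mpr hhom0)
    rw [if_pos rfl] at h1
    rw [← h1, homogeneousComponent_zero]
    simp [constantCoeff]
  rw [hrC] at hr
  set c := constantCoeff r with hc
  have e1 : (co j).1 = (co i).1 * c := by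
    have := congrArg (eval (fun k : Fin 2 => if k = 0 then 1 else 0)) hr
    simpa using this
  have e2 : (co j).2 = (co i).2 * c := by
    have := congrArg (eval (fun k : Fin 2 => if k = 0 then 0 else 1)) hr
    simpa using this
  exact hdist i j hij (by rw [e1, e2]; ring)

lemma Qpoly_ne_zero (hne : ∀ i, co i ≠ 0) : Qpoly co m ≠ 0 := by
  rw [Qpoly]
  exact Finset.prod_ne_zero_iff.mpr fun i _ => pow_ne_zero _ (A_ne_zero hne i)

lemma Qpoly_hom : (Qpoly co m).IsHomogeneous (∑ i, m i) := by
  rw [Qpoly]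
  apply IsHomogeneous.prod
  intro i _
  simpa using (lin_hom (co i).1 (co i).2).pow (m i)

lemma Q_dvd_w (hne : ∀ i, co i ≠ 0)
    (hdist : ∀ i j, i ≠ j → (co i).1 * (co j).2 ≠ (co i).2 * (co j).1)
    {θ η : MvPolynomial (Fin 2) K × MvPolynomial (Fin 2) K}
    (hθ : MemD co m θ) (hη : MemD co m η) :
    Qpoly co m ∣ (θ.1 * η.2 - θ.2 * η.1) := by
  set w := θ.1 * η.2 - θ.2 * η.1 with hw
  have hi : ∀ i : Fin n,
      (C (co i).1 * X 0 + C (co i).2 * X 1 : MvPolynomial (Fin 2) K) ^ m i ∣ w := by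
    intro i
    set a := (co i).1
    set b := (co i).2
    set A : MvPolynomial (Fin 2) K := C a * X 0 + C b * X 1 with hA
    by_cases ha : a = 0
    · have hb : b ≠ 0 := fun hb => hne i (Prod.ext ha hb)
      have h1 : A ^ m i ∣ C b * w := by
        have hid : C b * w = θ.1 * (C a * η.1 + C b * η.2) - (C a * θ.1 + C b * θ.2) * η.1 := by
          rw [hw]; ring
        rw [hid]
        exact dvd_sub ((hη i).mul_left θ.1) ((hθ i).mul_right η.1)
      have h2 : A ^ m i ∣ C b⁻¹ * (C b * w) := h1.mul_left _
      rwa [← mul_assoc, ← C_mul, inv_mul_cancel₀ hb, C_1, one_mul] at h2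
    · have h1 : A ^ m i ∣ C a * w := by
        have hid : C a * w = (C a * θ.1 + C b * θ.2) * η.2 - θ.2 * (C a * η.1 + C b * η.2) := by
          rw [hw]; ring
        rw [hid]
        exact dvd_sub ((hθ i).mul_right η.2) ((hη i).mul_left θ.2)
      have h2 : A ^ m i ∣ C a⁻¹ * (C a * w) := h1.mul_left _
      rwa [← mul_assoc, ← C_mul, inv_mul_cancel₀ ha, C_1, one_mul] at h2
  have main : ∀ s : Finset (Fin n),
      (∏ i ∈ s, (C (co i).1 * X 0 + C (co i).2 * X 1 : MvPolynomial (Fin 2) K) ^ m i) ∣ w := by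
    intro s
    induction s using Finset.induction_on with
    | empty => simp
    | @insert a s' has ih =>
      obtain ⟨u, hu⟩ := ih
      have hnd : ¬ ((C (co a).1 * X 0 + C (co a).2 * X 1 : MvPolynomial (Fin 2) K) ∣
          ∏ i ∈ s', (C (co i).1 * X 0 + C (co i).2 * X 1) ^ m i) := by
        intro hd
        obtain ⟨j, hjs, hdj⟩ := ((A_prime hne a).dvd_finset_prod_iff _).mp hd
        have haj : a ≠ j := by rintro rfl; exact has hjs
        exact A_not_dvd hne hdist haj ((A_prime hne a).dvd_of_dvd_pow hdj)
      have h2 : (C (co a).1 * X 0 + C (co a).2 * X 1 : MvPolynomial (Fin 2) K) ^ m a ∣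
          (∏ i ∈ s', (C (co i).1 * X 0 + C (co i).2 * X 1) ^ m i) * u := hu ▸ hi a
      obtain ⟨v, hv⟩ := (A_prime hne a).pow_dvd_of_dvd_mul_left _ hnd h2
      rw [Finset.prod_insert has, hu, hv]
      exact ⟨v, by ring⟩
  exact main Finset.univ

/-- If the wedge of two homogeneous logarithmic derivations is nonzero, then its degree
is at least `∑ m i`. -/
lemma deg_le (hne : ∀ i, co i ≠ 0)
    (hdist : ∀ i j, i ≠ j → (co i).1 * (co j).2 ≠ (co i).2 * (co j).1)
    {θ η : MvPolynomial (Fin 2) K × MvPolynomial (Fin 2) K} {a b : ℕ}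
    (hθ : MemD co m θ) (hη : MemD co m η)
    (hθ1 : θ.1.IsHomogeneous a) (hθ2 : θ.2.IsHomogeneous a)
    (hη1 : η.1.IsHomogeneous b) (hη2 : η.2.IsHomogeneous b)
    (hw : θ.1 * η.2 - θ.2 * η.1 ≠ 0) :
    (∑ i, m i) ≤ a + b := by
  obtain ⟨r, hr⟩ := Q_dvd_w hne hdist hθ hη
  have hr0 : r ≠ 0 := by
    rintro rfl
    exact hw (by rw [hr, mul_zero])
  have hwh : (Qpoly co m * r).IsHomogeneous (a + b) :=
    hr ▸ ((hθ1.mul hη2).sub (hθ2.mul hη1))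
  exact (homog_of_mul_homog (Qpoly_ne_zero hne) Qpoly_hom hr0 hwh).1

lemma memD_mono {H : Fin n} {θ : MvPolynomial (Fin 2) K × MvPolynomial (Fin 2) K}
    (hθ : MemD co (Function.update m H (m H + 1)) θ) : MemD co m θ := by
  intro i
  refine dvd_trans (pow_dvd_pow _ ?_) (hθ i)
  rcases eq_or_ne i H with rfl | h
  · simp
  · simp [Function.update_of_ne h]

lemma isExp_symm {d₁ d₂ : ℕ} (h : IsExp co m d₁ d₂) : IsExp co m d₂ d₁ := by
  obtain ⟨θ₁, θ₂, h1, h2, h11, h12, h21, h22, c, hc, hdet⟩ := h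
  exact ⟨θ₂, θ₁, h2, h1, h21, h22, h11, h12, -c, neg_ne_zero.mpr hc,
    by rw [map_neg, neg_mul, ← hdet]; ring⟩

lemma key (hne : ∀ i, co i ≠ 0)
    (hdist : ∀ i j, i ≠ j → (co i).1 * (co j).2 ≠ (co i).2 * (co j).1)
    (H : Fin n) {d₁ d₂ e₁ e₂ : ℕ} (hd : d₁ ≤ d₂) (he : e₁ ≤ e₂)
    (h₁ : IsExp co m d₁ d₂) (h₂ : IsExp co (Function.update m H (m H + 1)) e₁ e₂) :
    d₁ + d₂ + 1 = e₁ + e₂ ∧ d₁ ≤ e₁ ∧ d₂ ≤ e₂ := by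
  obtain ⟨θ₁, θ₂, hm1, hm2, h11, h12, h21, h22, c, hc, hdet⟩ := h₁
  obtain ⟨φ₁, φ₂, hm1', hm2', g11, g12, g21, g22, c', hc', hdet'⟩ := h₂
  set m' := Function.update m H (m H + 1) with hm'
  set N := ∑ i, m i with hN
  -- the right-hand sides are nonzero and homogeneous
  have hQ0 : Qpoly co m ≠ 0 := Qpoly_ne_zero hne
  have hQ0' : Qpoly co m' ≠ 0 := Qpoly_ne_zero hne
  have hCQ : (C c * Qpoly co m : MvPolynomial (Fin 2) K) ≠ 0 :=
    mul_ne_zero (fun h => hc (by simpa using h)) hQ0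
  have hCQ' : (C c' * Qpoly co m' : MvPolynomial (Fin 2) K) ≠ 0 :=
    mul_ne_zero (fun h => hc' (by simpa using h)) hQ0'
  have hQh : (C c * Qpoly co m : MvPolynomial (Fin 2) K).IsHomogeneous N := by
    simpa using (isHomogeneous_C _ c).mul (Qpoly_hom (m := m))
  have hsum' : (∑ i, m' i) = N + 1 := by
    rw [hm', Finset.sum_update_of_mem (Finset.mem_univ H), hN,
      ← Finset.sum_erase_add _ _ (Finset.mem_univ H)]
    have : Finset.univ \ {H} = Finset.univ.erase H := by
      ext x
      simp [Finset.mem_erase, Finset.mem_sdiff, and_comm]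
    rw [this]
    omega
  have hQh' : (C c' * Qpoly co m' : MvPolynomial (Fin 2) K).IsHomogeneous (N + 1) := by
    have := (isHomogeneous_C (Fin 2) c').mul (Qpoly_hom (co := co) (m := m'))
    rwa [hsum', zero_add] at this
  -- degree identities
  have hdN : d₁ + d₂ = N := by
    refine IsHomogeneous.inj_right ?_ (hdet ▸ hQh) (hdet ▸ hCQ)
    exact (h11.mul h22).sub (h12.mul h21)
  have heN : e₁ + e₂ = N + 1 := by
    refine IsHomogeneous.inj_right ?_ (hdet' ▸ hQh') (hdet' ▸ hCQ')
    exact (g11.mul g22).sub (g12.mul g21)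
  have hmφ1 : MemD co m φ₁ := memD_mono hm1'
  have hmφ2 : MemD co m φ₂ := memD_mono hm2'
  -- e₁ ≥ d₁
  have hlow : d₁ ≤ e₁ := by
    by_cases hz : φ₁.1 * θ₂.2 - φ₁.2 * θ₂.1 = 0
    · by_cases hz2 : φ₁.1 * θ₁.2 - φ₁.2 * θ₁.1 = 0
      · exfalso
        have k1 : (θ₁.1 * θ₂.2 - θ₁.2 * θ₂.1) * φ₁.1
            = (φ₁.1 * θ₂.2 - φ₁.2 * θ₂.1) * θ₁.1 - (φ₁.1 * θ₁.2 - φ₁.2 * θ₁.1) * θ₂.1 := by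
          ring
        have k2 : (θ₁.1 * θ₂.2 - θ₁.2 * θ₂.1) * φ₁.2
            = (φ₁.1 * θ₂.2 - φ₁.2 * θ₂.1) * θ₁.2 - (φ₁.1 * θ₁.2 - φ₁.2 * θ₁.1) * θ₂.2 := by
          ring
        rw [hz, hz2, hdet] at k1 k2
        simp only [zero_mul, sub_zero, zero_sub, neg_zero, sub_self] at k1 k2
        have hφ11 : φ₁.1 = 0 := by
          rcases mul_eq_zero.mp k1 with h | h
          · exact absurd h hCQ
          · exact h
        have hφ12 : φ₁.2 = 0 := by
          rcases mul_eq_zero.mp k2 with h | h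
          · exact absurd h hCQ
          · exact h
        rw [hφ11, hφ12] at hdet'
        simp only [zero_mul, sub_zero, sub_self] at hdet'
        exact hCQ' hdet'.symm
      · have := deg_le hne hdist hmφ1 hm1 g11 g12 h11 h12 hz2
        omega
    · have := deg_le hne hdist hmφ1 hm2 g11 g12 h21 h22 hz
      omega
  -- e₂ ≥ d₂
  have hhigh : d₂ ≤ e₂ := by
    by_cases hz : θ₁.1 * φ₂.2 - θ₁.2 * φ₂.1 = 0
    · by_cases hz2 : θ₁.1 * φ₁.2 - θ₁.2 * φ₁.1 = 0
      · exfalso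
        have k1 : (φ₁.1 * φ₂.2 - φ₁.2 * φ₂.1) * θ₁.1
            = (θ₁.1 * φ₂.2 - θ₁.2 * φ₂.1) * φ₁.1 - (θ₁.1 * φ₁.2 - θ₁.2 * φ₁.1) * φ₂.1 := by
          ring
        have k2 : (φ₁.1 * φ₂.2 - φ₁.2 * φ₂.1) * θ₁.2
            = (θ₁.1 * φ₂.2 - θ₁.2 * φ₂.1) * φ₁.2 - (θ₁.1 * φ₁.2 - θ₁.2 * φ₁.1) * φ₂.2 := by
          ring
        rw [hz, hz2, hdet'] at k1 k2
        simp only [zero_mul, sub_zero, zero_sub, neg_zero, sub_self] at k1 k2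
        have hθ11 : θ₁.1 = 0 := by
          rcases mul_eq_zero.mp k1 with h | h
          · exact absurd h hCQ'
          · exact h
        have hθ12 : θ₁.2 = 0 := by
          rcases mul_eq_zero.mp k2 with h | h
          · exact absurd h hCQ'
          · exact h
        rw [hθ11, hθ12] at hdet
        simp only [zero_mul, sub_zero, sub_self] at hdet
        exact hCQ hdet.symm
      · have := deg_le hne hdist hm1 hmφ1 h11 h12 g11 g12 hz2
        omega
    · have := deg_le hne hdist hm1 hmφ2 h11 h12 g21 g22 hz
      omega
  exact ⟨by omega, hlow, hhigh⟩

lemma absLemma {d₁ d₂ e₁ e₂ : ℕ} (hd : d₁ ≤ d₂) (he : e₁ ≤ e₂)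
    (hsum : d₁ + d₂ + 1 = e₁ + e₂) (h1 : d₁ ≤ e₁) (h2 : d₂ ≤ e₂) :
    |(|(d₁ : ℤ) - (d₂ : ℤ)|) - (|(e₁ : ℤ) - (e₂ : ℤ)|)| = 1 := by
  have a1 : |(d₁ : ℤ) - (d₂ : ℤ)| = (d₂ : ℤ) - d₁ := by
    rw [abs_sub_comm]
    exact abs_of_nonneg (by omega)
  have a2 : |(e₁ : ℤ) - (e₂ : ℤ)| = (e₂ : ℤ) - e₁ := by
    rw [abs_sub_comm]
    exact abs_of_nonneg (by omega)
  rw [a1, a2]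
  have : ((d₂ : ℤ) - d₁) - ((e₂ : ℤ) - e₁) = 1 ∨ ((d₂ : ℤ) - d₁) - ((e₂ : ℤ) - e₁) = -1 := by
    omega
  rcases this with h | h <;> rw [h] <;> norm_num

end Stmt8Aux

/-- For a 2-multiarrangement `(A, m)` and `H ∈ A`, if `(A, m)` has exponents
`(d₁, d₂)` and `(A, m + δ_H)` (the multiplicity increased by `1` on `H`) has exponents
`(e₁, e₂)`, then `|Δ(A,m) - Δ(A, m + δ_H)| = 1`, where `Δ = |d₁ - d₂|`.  In particular, if
`Δ(A,m) = 0` then `Δ(A, m ± δ_H) = 1` for every `H ∈ A`. -/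
theorem stmt_8 {K : Type*} [Field K] [CharZero K] (n : ℕ)
    (co : Fin n → K × K) (m : Fin n → ℕ)
    (hne : ∀ i, co i ≠ 0)
    (hdist : ∀ i j, i ≠ j → (co i).1 * (co j).2 ≠ (co i).2 * (co j).1)
    (hm : ∀ i, 0 < m i)
    (H : Fin n) (d₁ d₂ e₁ e₂ : ℕ)
    (h₁ : IsExp co m d₁ d₂)
    (h₂ : IsExp co (Function.update m H (m H + 1)) e₁ e₂) :
    |(|(d₁ : ℤ) - (d₂ : ℤ)|) - (|(e₁ : ℤ) - (e₂ : ℤ)|)| = 1 := by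
  rcases le_total d₁ d₂ with hd | hd <;> rcases le_total e₁ e₂ with he | he
  · obtain ⟨hs, hl, hh⟩ := Stmt8Aux.key hne hdist H hd he h₁ h₂
    exact Stmt8Aux.absLemma hd he hs hl hh
  · obtain ⟨hs, hl, hh⟩ := Stmt8Aux.key hne hdist H hd he h₁ (Stmt8Aux.isExp_symm h₂)
    rw [abs_sub_comm (e₁ : ℤ)]
    exact Stmt8Aux.absLemma hd he hs hl hh
  · obtain ⟨hs, hl, hh⟩ := Stmt8Aux.key hne hdist H hd he (Stmt8Aux.isExp_symm h₁) h₂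
    rw [abs_sub_comm (d₁ : ℤ)]
    exact Stmt8Aux.absLemma hd he hs hl hh
  · obtain ⟨hs, hl, hh⟩ := Stmt8Aux.key hne hdist H hd he (Stmt8Aux.isExp_symm h₁) (Stmt8Aux.isExp_symm h₂)
    rw [abs_sub_comm (d₁ : ℤ), abs_sub_comm (e₁ : ℤ)]
    exact Stmt8Aux.absLemma hd he hs hl hh

end
end

section
/- Let (A,m) be a balanced multiarrangement defined by x^{m₁} y^{m₂} (x−y)^{m₃} over a field of characteristic zero. Then Δ(A,m) ≤ 1; i.e., if |m| is even then exp(A,m) = (|m|/2, |m|/2), and if |m| is odd then exp(A,m) = ((|m|−1)/2, (|m|+1)/2). -/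
open MvPolynomial

noncomputable section

namespace Stmt13Aux
open Finset
variable {K : Type*} [Field K] [CharZero K]
set_option linter.unusedSectionVars false

/-- The operator `E_m = x ∂_x - m`. -/
def Em (m : ℕ) (P : MvPolynomial (Fin 2) K) : MvPolynomial (Fin 2) K :=
  X 0 * pderiv 0 P - C (m : K) * P

lemma Em_term (m : ℕ) (e : K) (j k : ℕ) :
    Em m (C e * X (0 : Fin 2) ^ j * X 1 ^ k) = C (e * ((j : K) - m)) * X 0 ^ j * X 1 ^ k := by
  unfold Em
  cases j with
  | zero => simp [pderiv_mul, pderiv_pow, pderiv_X_self, pderiv_X_of_ne, pderiv_C]; ring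
  | succ j =>
    have h0 : pderiv (0 : Fin 2) (X 1 ^ k : MvPolynomial (Fin 2) K) = 0 := by
      rw [pderiv_pow, pderiv_X_of_ne (by decide)]; ring
    simp only [pderiv_mul, pderiv_pow, pderiv_X_self, pderiv_C, h0, mul_zero, zero_mul,
      add_zero, zero_add, mul_one, map_sub, map_mul, map_natCast]
    push_cast
    ring

lemma Em_sum {ι : Type*} (m : ℕ) (s : Finset ι) (f : ι → MvPolynomial (Fin 2) K) :
    Em m (∑ i ∈ s, f i) = ∑ i ∈ s, Em m (f i) := by
  unfold Em
  rw [map_sum, mul_sum, mul_sum, ← sum_sub_distrib]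

lemma Em_dvd {k : ℕ} (m : ℕ) {P : MvPolynomial (Fin 2) K}
    (h : (X 0 - X 1) ^ (k + 1) ∣ P) : (X 0 - X 1) ^ k ∣ Em m P := by
  obtain ⟨H, rfl⟩ := h
  refine ⟨((k : MvPolynomial (Fin 2) K) + 1) * X 0 * H
    + (X 0 - X 1) * (X 0 * pderiv 0 H - C (m : K) * H), ?_⟩
  have h1 : pderiv (0 : Fin 2) ((X 0 - X 1) ^ (k + 1) : MvPolynomial (Fin 2) K)
      = ((k : MvPolynomial (Fin 2) K) + 1) * (X 0 - X 1) ^ k := by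
    rw [pderiv_pow]
    simp [pderiv_X_self, pderiv_X_of_ne]
  unfold Em
  rw [pderiv_mul, h1]
  ring



/-- iterated operator applied to `(x-y)^{c'} y^{d-c'}` -/
def recP (c' d L : ℕ) : ℕ → MvPolynomial (Fin 2) K
  | 0 => (X 0 - X 1) ^ c' * X 1 ^ (d - c')
  | (i + 1) => Em (L + i) (recP c' d L i)

lemma recP_dvd (c' d L : ℕ) : ∀ i, (X 0 - X 1) ^ (c' - i) ∣ (recP c' d L i : MvPolynomial (Fin 2) K) := by
  intro i
  induction i with
  | zero => exact Dvd.intro _ rfl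
  | succ i ih =>
    rcases le_or_gt c' i with h | h
    · have : c' - (i+1) = 0 := by omega
      rw [this, pow_zero]
      exact one_dvd _
    · have he : c' - i = (c' - (i+1)) + 1 := by omega
      rw [he] at ih
      exact Em_dvd _ ih

/-- the coefficient of `x^j y^{d-j}` -/
def coefZ (c' : ℕ) (S : Finset ℕ) (j : ℕ) : ℤ :=
  (-1) ^ (c' + j) * (c'.choose j) * ∏ m ∈ S, ((j : ℤ) - (m : ℤ))

lemma neg_one_pow_eq {R : Type*} [Ring R] {k c' : ℕ} (h : k ≤ c') :
    ((-1 : R)) ^ (c' - k) = (-1 : R) ^ (c' + k) := by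
  have : c' + k = (c' - k) + 2 * k := by omega
  rw [this, pow_add, pow_mul, neg_one_sq, one_pow, mul_one]

lemma recP_eq (c' d L : ℕ) (hcd : c' ≤ d) (i : ℕ) :
    (recP c' d L i : MvPolynomial (Fin 2) K) = ∑ j ∈ range (d + 1),
      C ((coefZ c' (Finset.Ico L (L + i)) j : ℤ) : K) * X 0 ^ j * X 1 ^ (d - j) := by
  induction i with
  | zero =>
    have base : ((X 0 - X 1 : MvPolynomial (Fin 2) K)) ^ c' * X 1 ^ (d - c')
        = ∑ j ∈ range (d + 1), C (((-1 : ℤ) ^ (c' + j) * (c'.choose j) : ℤ) : K) * X 0 ^ j * X 1 ^ (d - j) := by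
      rw [sub_eq_add_neg, add_pow]
      rw [← Finset.sum_subset (Finset.range_subset_range.2 (by omega : c' + 1 ≤ d + 1))
          (by
            intro j hj hj'
            have : c' < j := by
              simp only [mem_range] at hj hj' ⊢; omega
            simp [Nat.choose_eq_zero_of_lt this])]
      rw [Finset.sum_mul]
      apply Finset.sum_congr rfl
      intro j hj
      have hjc : j ≤ c' := by simp only [mem_range] at hj; omega
      have hy : (X 1 : MvPolynomial (Fin 2) K) ^ (c' - j) * X 1 ^ (d - c') = X 1 ^ (d - j) := by
        rw [← pow_add]; congr 1; omega
      rw [neg_pow, neg_one_pow_eq hjc, ← hy]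
      simp only [Int.cast_mul, Int.cast_pow, Int.cast_neg, Int.cast_one, Int.cast_natCast,
        map_mul, map_pow, map_neg, map_one, map_natCast]
      ring
    simpa [recP, coefZ] using base
  | succ i ih =>
    show Em (L + i) _ = _
    rw [ih, Em_sum]
    apply Finset.sum_congr rfl
    intro j hj
    rw [Em_term]
    have hp : Finset.Ico L (L + (i+1)) = insert (L + i) (Finset.Ico L (L + i)) := by
      ext k
      simp only [Finset.mem_Ico, Finset.mem_insert]
      omega
    have hsc : ((coefZ c' (Finset.Ico L (L + i)) j : ℤ) : K) * ((j : K) - ((L + i : ℕ) : K))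
        = ((coefZ c' (Finset.Ico L (L + (i+1))) j : ℤ) : K) := by
      simp only [coefZ, hp, Finset.prod_insert (by simp : (L + i) ∉ Finset.Ico L (L + i))]
      push_cast
      ring
    rw [← hsc]

/-- coefficient sequence for the derivation with parameters `(b, c, d, σ)` -/
def kk (b c d σ j : ℕ) : ℤ :=
  coefZ (c + (σ - (d - b + 1))) (Finset.Ico (d - b + 1) σ) j

def fP (b c d σ : ℕ) : MvPolynomial (Fin 2) K :=
  ∑ j ∈ Finset.Icc σ d, C ((kk b c d σ j : ℤ) : K) * X 0 ^ j * X 1 ^ (d - j)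

def gP (b c d σ : ℕ) : MvPolynomial (Fin 2) K :=
  - ∑ j ∈ Finset.range (d - b + 1), C ((kk b c d σ j : ℤ) : K) * X 0 ^ j * X 1 ^ (d - j)

lemma fP_homog (b c d σ : ℕ) : (fP b c d σ : MvPolynomial (Fin 2) K).IsHomogeneous d := by
  apply IsHomogeneous.sum
  intro j hj
  have hjd : j ≤ d := (Finset.mem_Icc.1 hj).2
  have h := ((isHomogeneous_C (Fin 2) ((kk b c d σ j : ℤ) : K)).mul
    (isHomogeneous_X_pow 0 j)).mul (isHomogeneous_X_pow 1 (d - j))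
  have h2 : 0 + j + (d - j) = d := by omega
  rwa [h2] at h

lemma gP_homog (b c d σ : ℕ) : (gP b c d σ : MvPolynomial (Fin 2) K).IsHomogeneous d := by
  apply IsHomogeneous.neg
  apply IsHomogeneous.sum
  intro j hj
  have hjd : j ≤ d := by
    have := Finset.mem_range.1 hj; omega
  have h := ((isHomogeneous_C (Fin 2) ((kk b c d σ j : ℤ) : K)).mul
    (isHomogeneous_X_pow 0 j)).mul (isHomogeneous_X_pow 1 (d - j))
  have h2 : 0 + j + (d - j) = d := by omega
  rwa [h2] at h

lemma x_dvd_fP (b c d σ : ℕ) : (X 0 : MvPolynomial (Fin 2) K) ^ σ ∣ fP b c d σ := by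
  apply Finset.dvd_sum
  intro j hj
  have : σ ≤ j := (Finset.mem_Icc.1 hj).1
  exact ((pow_dvd_pow (X 0 : MvPolynomial (Fin 2) K) this).mul_left _).mul_right _

lemma y_dvd_gP {b d : ℕ} (c σ : ℕ) (hb : b ≤ d) :
    (X 1 : MvPolynomial (Fin 2) K) ^ b ∣ gP b c d σ := by
  rw [gP, dvd_neg]
  apply Finset.dvd_sum
  intro j hj
  have hj' : j ≤ d - b := by have := Finset.mem_range.1 hj; omega
  have : b ≤ d - j := by omega
  exact Dvd.dvd.mul_left (pow_dvd_pow (X 1 : MvPolynomial (Fin 2) K) this) _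

lemma fP_sub_gP {b c d σ : ℕ} (hb : b ≤ d) (hL : d - b + 1 ≤ σ) (hσ : σ ≤ d + 1)
    (hc' : c + (σ - (d - b + 1)) ≤ d) :
    (fP b c d σ : MvPolynomial (Fin 2) K) - gP b c d σ
      = recP (c + (σ - (d - b + 1))) d (d - b + 1) (σ - (d - b + 1)) := by
  rw [recP_eq _ _ _ hc']
  have hLs : (d - b + 1) + (σ - (d - b + 1)) = σ := by omega
  rw [hLs]
  have hdisj : Disjoint (Finset.range (d - b + 1)) (Finset.Icc σ d) := by
    rw [Finset.disjoint_left]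
    intro x hx hx'
    simp only [Finset.mem_range] at hx
    have := (Finset.mem_Icc.1 hx').1
    omega
  have hsub : Finset.range (d - b + 1) ∪ Finset.Icc σ d ⊆ Finset.range (d + 1) := by
    intro x hx
    rcases Finset.mem_union.1 hx with h | h
    · simp only [Finset.mem_range] at h ⊢; omega
    · have := (Finset.mem_Icc.1 h).2
      simp only [Finset.mem_range]; omega
  simp only [fP, gP, kk, sub_neg_eq_add]
  rw [add_comm, ← Finset.sum_union hdisj]
  apply Finset.sum_subset hsub
  intro x hx hx'
  have hx1 : x < d + 1 := Finset.mem_range.1 hx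
  have hx2 : d - b + 1 ≤ x ∧ x < σ := by
    by_contra hcon
    apply hx'
    rcases Nat.lt_or_ge x (d - b + 1) with h | h
    · exact Finset.mem_union_left _ (Finset.mem_range.2 h)
    · refine Finset.mem_union_right _ (Finset.mem_Icc.2 ⟨?_, by omega⟩)
      omega
  have hz : (∏ m ∈ Finset.Ico (d - b + 1) σ, ((x : ℤ) - (m : ℤ))) = 0 :=
    Finset.prod_eq_zero (Finset.mem_Ico.2 hx2) (by simp)
  simp [coefZ, hz]

lemma dvd_fP_sub_gP {b c d σ : ℕ} (hb : b ≤ d) (hL : d - b + 1 ≤ σ) (hσ : σ ≤ d + 1)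
    (hc' : c + (σ - (d - b + 1)) ≤ d) :
    ((X 0 - X 1 : MvPolynomial (Fin 2) K)) ^ c ∣ fP b c d σ - gP b c d σ := by
  rw [fP_sub_gP hb hL hσ hc']
  have := recP_dvd (K := K) (c + (σ - (d - b + 1))) d (d - b + 1) (σ - (d - b + 1))
  have he : c + (σ - (d - b + 1)) - (σ - (d - b + 1)) = c := by omega
  rwa [he] at this

lemma prime_X0 : Prime (X 0 : MvPolynomial (Fin 2) K) := by
  rw [← MulEquiv.prime_iff (MvPolynomial.finSuccEquiv K 1).toMulEquiv]
  have h : (MvPolynomial.finSuccEquiv K 1).toMulEquiv (X 0)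
      = (Polynomial.X : Polynomial (MvPolynomial (Fin 1) K)) := by
    simpa using MvPolynomial.finSuccEquiv_X_zero (R := K) (n := 1)
  rw [h]
  exact Polynomial.prime_X

lemma prime_X_fin1 : Prime (X 0 : MvPolynomial (Fin 1) K) := by
  rw [← MulEquiv.prime_iff (MvPolynomial.finSuccEquiv K 0).toMulEquiv]
  have h : (MvPolynomial.finSuccEquiv K 0).toMulEquiv (X 0)
      = (Polynomial.X : Polynomial (MvPolynomial (Fin 0) K)) := by
    simpa using MvPolynomial.finSuccEquiv_X_zero (R := K) (n := 0)
  rw [h]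
  exact Polynomial.prime_X

lemma prime_X1 : Prime (X 1 : MvPolynomial (Fin 2) K) := by
  rw [← MulEquiv.prime_iff (MvPolynomial.finSuccEquiv K 1).toMulEquiv]
  have h : (MvPolynomial.finSuccEquiv K 1).toMulEquiv (X 1)
      = (Polynomial.C (X 0) : Polynomial (MvPolynomial (Fin 1) K)) := by
    show (MvPolynomial.finSuccEquiv K 1) (X 1) = _
    rw [show (1 : Fin 2) = Fin.succ 0 from rfl, MvPolynomial.finSuccEquiv_X_succ]
  rw [h]
  exact Polynomial.prime_C_iff.2 prime_X_fin1

lemma prime_X0_sub_X1 : Prime (X 0 - X 1 : MvPolynomial (Fin 2) K) := by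
  rw [← MulEquiv.prime_iff (MvPolynomial.finSuccEquiv K 1).toMulEquiv]
  have h : (MvPolynomial.finSuccEquiv K 1).toMulEquiv (X 0 - X 1)
      = (Polynomial.X - Polynomial.C (X 0) : Polynomial (MvPolynomial (Fin 1) K)) := by
    show (MvPolynomial.finSuccEquiv K 1) (X 0 - X 1) = _
    rw [map_sub, MvPolynomial.finSuccEquiv_X_zero,
      show (1 : Fin 2) = Fin.succ 0 from rfl, MvPolynomial.finSuccEquiv_X_succ]
  rw [h]
  exact Polynomial.prime_X_sub_C _

lemma eq_C_mul_of_dvd_homogeneous {n : ℕ} {Q W : MvPolynomial (Fin 2) K}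
    (hQ : Q.IsHomogeneous n) (hW : W.IsHomogeneous n) (hQ0 : Q ≠ 0) (h : Q ∣ W) :
    ∃ κ : K, W = C κ * Q := by
  obtain ⟨V, rfl⟩ := h
  refine ⟨constantCoeff V, ?_⟩
  have key : ∀ i, 0 < i → homogeneousComponent i V = 0 := by
    intro i0 hi0
    by_cases hmem : i0 ∈ Finset.range (V.totalDegree + 1)
    · have hQV : Q * V = ∑ i ∈ Finset.range (V.totalDegree + 1), Q * homogeneousComponent i V := by
        rw [← Finset.mul_sum, sum_homogeneousComponent]
      have hzero : homogeneousComponent (n + i0) (Q * V) = 0 := by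
        have hmem2 : Q * V ∈ homogeneousSubmodule (Fin 2) K n :=
          (mem_homogeneousSubmodule _ _).2 hW
        rw [homogeneousComponent_of_mem hmem2, if_neg (by omega)]
      rw [hQV, map_sum] at hzero
      have heach : ∀ i ∈ Finset.range (V.totalDegree + 1), i ≠ i0 →
          homogeneousComponent (n + i0) (Q * homogeneousComponent i V) = 0 := by
        intro i _ hne
        have hm : Q * homogeneousComponent i V ∈ homogeneousSubmodule (Fin 2) K (n + i) :=
          (mem_homogeneousSubmodule _ _).2 (hQ.mul (homogeneousComponent_isHomogeneous i V))
        rw [homogeneousComponent_of_mem hm, if_neg (by omega)]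
      rw [Finset.sum_eq_single i0 heach (fun hni => absurd hmem hni)] at hzero
      have hm : Q * homogeneousComponent i0 V ∈ homogeneousSubmodule (Fin 2) K (n + i0) :=
        (mem_homogeneousSubmodule _ _).2 (hQ.mul (homogeneousComponent_isHomogeneous i0 V))
      rw [homogeneousComponent_of_mem hm, if_pos rfl] at hzero
      rcases mul_eq_zero.1 hzero with h | h
      · exact absurd h hQ0
      · exact h
    · apply homogeneousComponent_eq_zero
      simp only [Finset.mem_range] at hmem
      omega
  have hV : V = C (constantCoeff V) := by
    conv_lhs => rw [← sum_homogeneousComponent V]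
    rw [Finset.sum_eq_single 0 (fun i _ hne => key i (Nat.pos_of_ne_zero hne)) (by simp)]
    rw [homogeneousComponent_zero]
    rfl
  conv_lhs => rw [hV]
  rw [mul_comm]

lemma kk_ne_zero {b c d σ j : ℕ} (h1 : j ∉ Finset.Ico (d - b + 1) σ)
    (h2 : j ≤ c + (σ - (d - b + 1))) : kk b c d σ j ≠ 0 := by
  unfold kk coefZ
  apply mul_ne_zero
  apply mul_ne_zero
  · exact pow_ne_zero _ (by norm_num)
  · exact_mod_cast Nat.cast_ne_zero.2 (Nat.choose_pos h2).ne'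
  · rw [Finset.prod_ne_zero_iff]
    intro m hm
    have : m ≠ j := by
      intro h; exact h1 (h ▸ hm)
    intro hcon
    apply this
    omega

/-- dehomogenization -/
def ev : MvPolynomial (Fin 2) K →ₐ[K] Polynomial K :=
  aeval (fun i => if i = 0 then Polynomial.X else 1)

lemma ev_term (e : K) (j k : ℕ) :
    ev (C e * X (0 : Fin 2) ^ j * X 1 ^ k) = Polynomial.C e * Polynomial.X ^ j := by
  unfold ev
  simp [aeval_X, if_pos, if_neg]

lemma coeff_ev_sum (s : Finset ℕ) (coefs : ℕ → K) (dd : ℕ → ℕ) (k : ℕ) :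
    (ev (∑ j ∈ s, C (coefs j) * X (0 : Fin 2) ^ j * X 1 ^ (dd j))).coeff k
      = if k ∈ s then coefs k else 0 := by
  rw [map_sum]
  have : ∀ j, (ev (C (coefs j) * X (0 : Fin 2) ^ j * X 1 ^ (dd j))) = Polynomial.C (coefs j) * Polynomial.X ^ j := fun j => ev_term _ _ _
  rw [Finset.sum_congr rfl (fun j _ => this j), Polynomial.finset_sum_coeff]
  by_cases hk : k ∈ s
  · rw [if_pos hk, Finset.sum_eq_single k
      (fun i _ hne => by rw [Polynomial.coeff_C_mul, Polynomial.coeff_X_pow, if_neg (fun h => hne h.symm), mul_zero])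
      (fun h => absurd hk h)]
    rw [Polynomial.coeff_C_mul, Polynomial.coeff_X_pow, if_pos rfl, mul_one]
  · rw [if_neg hk]
    apply Finset.sum_eq_zero
    intro i hi
    rw [Polynomial.coeff_C_mul, Polynomial.coeff_X_pow, if_neg (by rintro rfl; exact hk hi), mul_zero]

lemma coeff_ev_fP (b c d σ k : ℕ) :
    (ev (fP b c d σ : MvPolynomial (Fin 2) K)).coeff k
      = if k ∈ Finset.Icc σ d then ((kk b c d σ k : ℤ) : K) else 0 := by
  rw [fP]; exact coeff_ev_sum _ _ _ _

lemma coeff_ev_gP (b c d σ k : ℕ) :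
    (ev (gP b c d σ : MvPolynomial (Fin 2) K)).coeff k
      = - (if k ∈ Finset.range (d - b + 1) then ((kk b c d σ k : ℤ) : K) else 0) := by
  rw [gP, map_neg, Polynomial.coeff_neg]
  rw [coeff_ev_sum _ _ _ _]

lemma W_ne_zero {a b c d₁ d₂ : ℕ} (ha1 : d₁ - b + 1 ≤ a) (ha2 : a ≤ d₁)
    (hc1 : a ≤ c + (a - (d₁ - b + 1))) :
    (fP b c d₁ a * gP b c d₂ (a+1) - gP b c d₁ a * fP b c d₂ (a+1)
      : MvPolynomial (Fin 2) K) ≠ 0 := by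
  intro hW
  have h0 := congrArg (fun P => (ev (K := K) P).coeff a) hW
  simp only [map_sub, map_mul, Polynomial.coeff_sub, Polynomial.coeff_zero, map_zero] at h0
  -- second product has zero coefficient in degree a
  have h2 : (ev (gP b c d₁ a : MvPolynomial (Fin 2) K) * ev (fP b c d₂ (a+1))).coeff a = 0 := by
    rw [Polynomial.coeff_mul]
    apply Finset.sum_eq_zero
    intro p hp
    have hsum : p.1 + p.2 = a := Finset.HasAntidiagonal.mem_antidiagonal.1 hp
    have : (ev (fP b c d₂ (a+1) : MvPolynomial (Fin 2) K)).coeff p.2 = 0 := by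
      rw [coeff_ev_fP, if_neg]
      intro hmem
      have := (Finset.mem_Icc.1 hmem).1
      omega
    rw [this, mul_zero]
  have h1 : (ev (fP b c d₁ a : MvPolynomial (Fin 2) K) * ev (gP b c d₂ (a+1))).coeff a
      = ((kk b c d₁ a a : ℤ) : K) * (- ((kk b c d₂ (a+1) 0 : ℤ) : K)) := by
    rw [Polynomial.coeff_mul]
    rw [Finset.sum_eq_single (a, 0)]
    · rw [coeff_ev_fP, coeff_ev_gP, if_pos (Finset.mem_Icc.2 ⟨le_rfl, ha2⟩),
        if_pos (Finset.mem_range.2 (by omega))]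
    · intro p hp hne
      have hsum : p.1 + p.2 = a := Finset.HasAntidiagonal.mem_antidiagonal.1 hp
      have hlt : p.1 < a := by
        rcases Nat.lt_or_ge p.1 a with h | h
        · exact h
        · exfalso; apply hne
          have : p.1 = a := by omega
          have : p.2 = 0 := by omega
          ext <;> omega
      rw [coeff_ev_fP, if_neg (by
        intro hmem
        have := (Finset.mem_Icc.1 hmem).1
        omega), zero_mul]
    · intro hnot
      exact absurd (Finset.HasAntidiagonal.mem_antidiagonal.2 (by omega)) hnot
  rw [h1, h2, sub_zero] at h0
  have hk1 : kk b c d₁ a a ≠ 0 := by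
    apply kk_ne_zero
    · simp [Finset.mem_Ico]
    · exact hc1
  have hk2 : kk b c d₂ (a+1) 0 ≠ 0 := by
    apply kk_ne_zero
    · simp only [Finset.mem_Ico]
      omega
    · omega
  apply mul_ne_zero (by exact_mod_cast Int.cast_ne_zero.2 hk1)
    (neg_ne_zero.2 (by exact_mod_cast Int.cast_ne_zero.2 hk2)) h0

lemma not_X1_dvd_X0_pow (a : ℕ) : ¬ (X 1 : MvPolynomial (Fin 2) K) ∣ X 0 ^ a := by
  intro h
  obtain ⟨u, hu⟩ := prime_X1.dvd_of_dvd_pow h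
  have h0 := congrArg (eval (fun i : Fin 2 => if i = 0 then (1 : K) else 0)) hu
  simp at h0

lemma not_sub_dvd_mul (a b : ℕ) :
    ¬ (X 0 - X 1 : MvPolynomial (Fin 2) K) ∣ X 0 ^ a * X 1 ^ b := by
  intro h
  rcases (prime_X0_sub_X1.2.2 _ _ h) with h | h
  · obtain ⟨u, hu⟩ := prime_X0_sub_X1.dvd_of_dvd_pow h
    have h0 := congrArg (eval (fun _ : Fin 2 => (1 : K))) hu
    simp at h0
  · obtain ⟨u, hu⟩ := prime_X0_sub_X1.dvd_of_dvd_pow h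
    have h0 := congrArg (eval (fun _ : Fin 2 => (1 : K))) hu
    simp at h0

lemma Q0_dvd_W {a b c : ℕ} {W : MvPolynomial (Fin 2) K}
    (hx : (X 0 : MvPolynomial (Fin 2) K) ^ a ∣ W)
    (hy : (X 1 : MvPolynomial (Fin 2) K) ^ b ∣ W)
    (hxy : (X 0 - X 1 : MvPolynomial (Fin 2) K) ^ c ∣ W) :
    (X 0 : MvPolynomial (Fin 2) K) ^ a * X 1 ^ b * (X 0 - X 1) ^ c ∣ W := by
  obtain ⟨A, rfl⟩ := hx
  have hyA : (X 1 : MvPolynomial (Fin 2) K) ^ b ∣ A :=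
    prime_X1.pow_dvd_of_dvd_mul_left _ (not_X1_dvd_X0_pow a) hy
  obtain ⟨B, rfl⟩ := hyA
  have hxyB : (X 0 - X 1 : MvPolynomial (Fin 2) K) ^ c ∣ B := by
    rw [← mul_assoc] at hxy
    exact prime_X0_sub_X1.pow_dvd_of_dvd_mul_left _ (not_sub_dvd_mul a b) hxy
  obtain ⟨D, rfl⟩ := hxyB
  exact ⟨D, by ring⟩

theorem isExp_main (a b c d₁ d₂ : ℕ)
    (hn : d₁ + d₂ = a + b + c) (h12 : d₁ ≤ d₂) (h21 : d₂ ≤ d₁ + 1)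
    (hbal1 : 2 * a < a + b + c) (hbal2 : 2 * b < a + b + c) (hbal3 : 2 * c < a + b + c) :
    IsExp (![((1 : K), 0), (0, 1), (1, -1)]) ![a, b, c] d₁ d₂ := by
  -- arithmetic facts
  have hb1 : b ≤ d₁ := by omega
  have hb2 : b ≤ d₂ := by omega
  have hL1 : d₁ - b + 1 ≤ a := by omega
  have hL2 : d₂ - b + 1 ≤ a + 1 := by omega
  have hσ1 : a ≤ d₁ := by omega
  have hσ2 : a + 1 ≤ d₂ + 1 := by omega
  have hc'1 : c + (a - (d₁ - b + 1)) ≤ d₁ := by omega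
  have hc'2 : c + (a + 1 - (d₂ - b + 1)) ≤ d₂ := by omega
  have hca : a ≤ c + (a - (d₁ - b + 1)) := by omega
  refine ⟨(fP b c d₁ a, gP b c d₁ a), (fP b c d₂ (a+1), gP b c d₂ (a+1)), ?_, ?_,
    fP_homog _ _ _ _, gP_homog _ _ _ _, fP_homog _ _ _ _, gP_homog _ _ _ _, ?_⟩
  · -- MemD θ₁
    intro i
    fin_cases i
    · simpa using x_dvd_fP (K := K) b c d₁ a
    · simpa using y_dvd_gP (K := K) c a hb1
    · have := dvd_fP_sub_gP (K := K) hb1 hL1 (by omega) hc'1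
      simp only [Matrix.cons_val_two, Matrix.tail_cons, Matrix.head_cons, map_one, map_neg,
        one_mul, neg_mul, Matrix.cons_val_zero, Matrix.cons_val_one, Matrix.head_fin_const]
      simpa [sub_eq_add_neg] using this
  · -- MemD θ₂
    intro i
    fin_cases i
    · have := (pow_dvd_pow (X 0 : MvPolynomial (Fin 2) K) (by omega : a ≤ a + 1)).trans
        (x_dvd_fP (K := K) b c d₂ (a+1))
      simpa using this
    · simpa using y_dvd_gP (K := K) c (a+1) hb2
    · have := dvd_fP_sub_gP (K := K) hb2 hL2 (by omega) hc'2
      simp only [Matrix.cons_val_two, Matrix.tail_cons, Matrix.head_cons, map_one, map_neg,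
        one_mul, neg_mul, Matrix.cons_val_zero, Matrix.cons_val_one, Matrix.head_fin_const]
      simpa [sub_eq_add_neg] using this
  · -- determinant
    set W : MvPolynomial (Fin 2) K :=
      fP b c d₁ a * gP b c d₂ (a+1) - gP b c d₁ a * fP b c d₂ (a+1) with hWdef
    have hWx : (X 0 : MvPolynomial (Fin 2) K) ^ a ∣ W := by
      apply dvd_sub
      · exact (x_dvd_fP b c d₁ a).mul_right _
      · exact (((pow_dvd_pow (X 0 : MvPolynomial (Fin 2) K) (by omega : a ≤ a + 1)).trans
          (x_dvd_fP b c d₂ (a+1))).mul_left _)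
    have hWy : (X 1 : MvPolynomial (Fin 2) K) ^ b ∣ W := by
      apply dvd_sub
      · exact (y_dvd_gP c (a+1) hb2).mul_left _
      · exact (y_dvd_gP c a hb1).mul_right _
    have hWxy : (X 0 - X 1 : MvPolynomial (Fin 2) K) ^ c ∣ W := by
      have h1 := dvd_fP_sub_gP (K := K) hb1 hL1 (by omega) hc'1
      have h2 := dvd_fP_sub_gP (K := K) hb2 hL2 (by omega) hc'2
      have : W = fP b c d₁ a * (gP b c d₂ (a+1) - fP b c d₂ (a+1))
          + (fP b c d₁ a - gP b c d₁ a) * fP b c d₂ (a+1) := by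
        rw [hWdef]; ring
      rw [this]
      have h2' : (X 0 - X 1 : MvPolynomial (Fin 2) K) ^ c
          ∣ gP b c d₂ (a+1) - fP b c d₂ (a+1) := by
        have hn2 := dvd_neg.mpr h2
        rwa [neg_sub] at hn2
      exact dvd_add (h2'.mul_left _) (h1.mul_right _)
    have hQdvd := Q0_dvd_W hWx hWy hWxy
    have hQhom : ((X 0 : MvPolynomial (Fin 2) K) ^ a * X 1 ^ b * (X 0 - X 1) ^ c).IsHomogeneous
        (d₁ + d₂) := by
      have h := ((isHomogeneous_X_pow (0 : Fin 2) a (R := K)).mul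
        (isHomogeneous_X_pow 1 b)).mul
        ((((isHomogeneous_X (K) (0 : Fin 2))).sub (isHomogeneous_X K 1)).pow c)
      have he : a + b + 1 * c = d₁ + d₂ := by omega
      rwa [he] at h
    have hWhom : W.IsHomogeneous (d₁ + d₂) :=
      ((fP_homog b c d₁ a).mul (gP_homog b c d₂ (a+1))).sub
        ((gP_homog b c d₁ a).mul (fP_homog b c d₂ (a+1)))
    have hQ0 : ((X 0 : MvPolynomial (Fin 2) K) ^ a * X 1 ^ b * (X 0 - X 1) ^ c) ≠ 0 :=
      mul_ne_zero (mul_ne_zero (pow_ne_zero _ (X_ne_zero _)) (pow_ne_zero _ (X_ne_zero _)))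
        (pow_ne_zero _ prime_X0_sub_X1.ne_zero)
    obtain ⟨κ, hκ⟩ := eq_C_mul_of_dvd_homogeneous hQhom hWhom hQ0 hQdvd
    have hWne : W ≠ 0 := W_ne_zero hL1 hσ1 hca
    have hκ0 : κ ≠ 0 := by
      rintro rfl
      rw [map_zero, zero_mul] at hκ
      exact hWne hκ
    refine ⟨κ, hκ0, ?_⟩
    have hQpoly : Qpoly (![((1 : K), 0), (0, 1), (1, -1)]) ![a, b, c]
        = (X 0 : MvPolynomial (Fin 2) K) ^ a * X 1 ^ b * (X 0 - X 1) ^ c := by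
      rw [Qpoly, Fin.prod_univ_three]
      simp only [Matrix.cons_val_zero, Matrix.cons_val_one, Matrix.head_cons,
        Matrix.cons_val_two, Matrix.tail_cons, map_one, map_zero, map_neg, one_mul, zero_mul,
        neg_mul, add_zero, zero_add]
      rw [← sub_eq_add_neg]
    rw [hQpoly]
    exact hκ


end Stmt13Aux

/-- For a balanced multiarrangement defined by `x^{m₁} y^{m₂} (x-y)^{m₃}`
over a field of characteristic zero, `Δ(A,m) ≤ 1`: if `|m|` is even then
`exp(A,m) = (|m|/2, |m|/2)`, and if `|m|` is odd then
`exp(A,m) = ((|m|-1)/2, (|m|+1)/2)`. -/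
theorem stmt_13 {K : Type*} [Field K] [CharZero K] (m₁ m₂ m₃ : ℕ)
    (h₁ : 0 < m₁) (h₂ : 0 < m₂) (h₃ : 0 < m₃)
    (hbal₁ : 2 * m₁ < m₁ + m₂ + m₃) (hbal₂ : 2 * m₂ < m₁ + m₂ + m₃)
    (hbal₃ : 2 * m₃ < m₁ + m₂ + m₃) :
    ((m₁ + m₂ + m₃) % 2 = 0 →
      IsExp (![((1 : K), 0), (0, 1), (1, -1)]) ![m₁, m₂, m₃]
        ((m₁ + m₂ + m₃) / 2) ((m₁ + m₂ + m₃) / 2)) ∧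
    ((m₁ + m₂ + m₃) % 2 = 1 →
      IsExp (![((1 : K), 0), (0, 1), (1, -1)]) ![m₁, m₂, m₃]
        ((m₁ + m₂ + m₃ - 1) / 2) ((m₁ + m₂ + m₃ + 1) / 2)) := by
  constructor
  · intro hpar
    exact Stmt13Aux.isExp_main m₁ m₂ m₃ _ _ (by omega) (by omega) (by omega) hbal₁ hbal₂ hbal₃
  · intro hpar
    exact Stmt13Aux.isExp_main m₁ m₂ m₃ _ _ (by omega) (by omega) (by omega) hbal₁ hbal₂ hbal₃

end
end
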